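/- For any partial function f : ℕ →. ℕ, f is subTuring equivalent to its graph function G_f : ℕ →. Bool, where G_f(⟨n,m⟩) = 1 if f(n)↓ = m, G_f(⟨n,m⟩) = 0 if f(n)↓ ≠ m, and G_f(⟨n,m⟩)↑ if f(n)↑. -/

import Mathlib

open Classical

noncomputable section

/-- `as` is a valid answer history for the sequential oracle computation of `Φ`
with oracle `g` on input `n`: at each round `k`, the machine outputs a query
`(false, q)` with `q` in the domain of `g`, answered by `g q = as[k]`. -/
def ValidHist (Φ : List ℕ →. Bool × ℕ) (g : ℕ →. ℕ) (n : ℕ) (as : List ℕ) : Prop :=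
  ∀ (k : ℕ) (hk : k < as.length), ∃ q : ℕ,
    (false, q) ∈ Φ (n :: as.take k) ∧ (as[k]'hk) ∈ g q

/-- The sequential oracle computation `Φ[g](n)` halts with output `m`. -/
def HaltsTo (Φ : List ℕ →. Bool × ℕ) (g : ℕ →. ℕ) (n m : ℕ) : Prop :=
  ∃ as : List ℕ, ValidHist Φ g n as ∧ (true, m) ∈ Φ (n :: as)

/-- subTuring reducibility: `f ⊆ Φ[g]` for some partial computable `Φ`. -/
def SubTuringLE (f g : ℕ →. ℕ) : Prop :=
  ∃ Φ : List ℕ →. Bool × ℕ, Partrec Φ ∧ ∀ n m, m ∈ f n → HaltsTo Φ g n m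

/-- subTuring equivalence. -/
def SubTuringEquiv (f g : ℕ →. ℕ) : Prop := SubTuringLE f g ∧ SubTuringLE g f

/-- The graph function of `f`: `G_f(⟨n,m⟩) = 1` if `f(n)↓ = m`,
`0` if `f(n)↓ ≠ m`, and undefined if `f(n)↑`. -/
def GraphFn (f : ℕ →. ℕ) : ℕ →. ℕ := fun p =>
  (f p.unpair.1).map fun v => if v = p.unpair.2 then 1 else 0

/-- Search machine: query ⟨n,0⟩, ⟨n,1⟩, ... until the answer is 1, then output
the index of the last query. -/
def Phi1 : List ℕ → Bool × ℕ := fun l =>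
  if l.reverse.headI = 1 ∧ 2 ≤ l.length then (true, l.length - 2)
  else (false, Nat.pair l.headI (l.length - 1))

def Phi2 : List ℕ → Bool × ℕ := fun l =>
  if l.length ≤ 1 then (false, l.headI.unpair.1)
  else (true, if l.tail.headI = l.headI.unpair.2 then 1 else 0)

theorem phi1_comp : Computable Phi1 := by
  have hrev : Primrec fun l : List ℕ => l.reverse.headI :=
    Primrec.list_headI.comp Primrec.list_reverse
  have hlen : Primrec fun l : List ℕ => l.length := Primrec.list_length
  have hcond : PrimrecPred fun l : List ℕ => l.reverse.headI = 1 ∧ 2 ≤ l.length :=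
    PrimrecPred.and (Primrec.eq.comp hrev (Primrec.const 1))
      (Primrec.nat_le.comp (Primrec.const 2) hlen)
  have h : Primrec Phi1 :=
    Primrec.ite hcond
      ((Primrec.const true).pair (Primrec.nat_sub.comp hlen (Primrec.const 2)))
      ((Primrec.const false).pair
        (Primrec₂.natPair.comp Primrec.list_headI
          (Primrec.nat_sub.comp hlen (Primrec.const 1))))
  exact h.to_comp

theorem phi2_comp : Computable Phi2 := by
  have hlen : Primrec fun l : List ℕ => l.length := Primrec.list_length
  have hh : Primrec fun l : List ℕ => l.headI := Primrec.list_headI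
  have hth : Primrec fun l : List ℕ => l.tail.headI :=
    Primrec.list_headI.comp Primrec.list_tail
  have h : Primrec Phi2 :=
    Primrec.ite (Primrec.nat_le.comp hlen (Primrec.const 1))
      ((Primrec.const false).pair
        ((Primrec.fst.comp Primrec.unpair).comp hh))
      ((Primrec.const true).pair
        (Primrec.ite
          (Primrec.eq.comp hth ((Primrec.snd.comp Primrec.unpair).comp hh))
          (Primrec.const 1) (Primrec.const 0)))
  exact h.to_comp

theorem graph_subTuring_equiv (f : ℕ →. ℕ) : SubTuringEquiv f (GraphFn f) := by
  constructor
  · refine ⟨fun l => Part.some (Phi1 l), Computable.partrec phi1_comp, ?_⟩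
    intro n m hm
    refine ⟨List.replicate m 0 ++ [1], ?_, ?_⟩
    · intro k hk
      simp only [List.length_append, List.length_replicate, List.length_cons,
        List.length_nil] at hk
      have hkm : k ≤ m := by omega
      refine ⟨Nat.pair n k, ?_, ?_⟩
      · have htake : (List.replicate m 0 ++ [1]).take k = List.replicate k 0 := by
          rw [List.take_append_of_le_length (by simpa using hkm)]
          simp [List.take_replicate, Nat.min_eq_left hkm]
        rw [htake]
        have : Phi1 (n :: List.replicate k 0) = (false, Nat.pair n k) := by
          unfold Phi1
          rw [if_neg]
          · simp
          · rcases Nat.eq_zero_or_pos k with h0 | h0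
            · subst h0; simp
            · intro ⟨h1, _⟩
              obtain ⟨j, rfl⟩ := Nat.exists_eq_succ_of_ne_zero h0.ne'
              simp [List.replicate_succ'] at h1
        simp [this]
      · have hval : (List.replicate m 0 ++ [1])[k]'(by simpa using by omega) =
            if k = m then 1 else 0 := by
          rcases Nat.lt_or_ge k m with h | h
          · rw [List.getElem_append_left (by simpa using h)]
            simp [Nat.ne_of_lt h]
          · have : k = m := le_antisymm hkm h
            subst this
            rw [List.getElem_append_right (by simp)]
            simp
        simp only [GraphFn, Nat.unpair_pair]
        rw [Part.mem_map_iff]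
        refine ⟨m, hm, ?_⟩
        rcases Nat.lt_or_ge k m with h | h
        · simp [hval, Nat.ne_of_lt h, (Nat.ne_of_lt h).symm]
        · have : k = m := le_antisymm hkm h
          subst this; simp [hval]
    · have : Phi1 (n :: (List.replicate m 0 ++ [1])) = (true, m) := by
        unfold Phi1
        rw [if_pos]
        · simp
        · constructor
          · simp [List.reverse_append]
          · simp
      simp [this]
  · refine ⟨fun l => Part.some (Phi2 l), Computable.partrec phi2_comp, ?_⟩
    intro p x hx
    simp only [GraphFn, Part.mem_map_iff] at hx
    obtain ⟨v, hv, rfl⟩ := hx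
    refine ⟨[v], ?_, ?_⟩
    · intro k hk
      have hk0 : k = 0 := by simpa using hk
      subst hk0
      exact ⟨p.unpair.1, by simp [Phi2], by simpa using hv⟩
    · simp [Phi2]
      by_cases h : v = (Nat.unpair p).2 <;> simp [h]
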